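/- arXiv:2002.01959 — 4 statements merged into one kernel-verified Lean document; each statement's English description precedes it below -/
import Mathlib

section
/- Let H be a Hilbert space, V_1, ..., V_n vector spaces, and T_k : H → V_k linear operators for k = 1, ..., n such that each kernel ker(T_k) is closed in H. If the system of closed subspaces (ker T_1)^⊥, ..., (ker T_n)^⊥ possesses the inverse best approximation property, then for arbitrary elements v_1 ∈ Ran(T_1), ..., v_n ∈ Ran(T_n) there exists x ∈ H with T_k x = v_k for all k. -/
set_option maxHeartbeats 1000000
set_option synthInstance.maxHeartbeats 200000


noncomputable def orthProjCLM {𝕜 H : Type*} [RCLike 𝕜] [NormedAddCommGroup H]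
    [InnerProductSpace 𝕜 H] [CompleteSpace H] (K : Submodule 𝕜 H)
    (hK : IsClosed (K : Set H)) : H →L[𝕜] H :=
  haveI : CompleteSpace K := hK.completeSpace_coe
  K.subtypeL.comp K.orthogonalProjectionOnto

/-- The system of closed subspaces `K 0, ..., K (n-1)` possesses the
inverse best approximation property: for arbitrary `x i ∈ K i` there is `y`
whose orthogonal projection onto each `K i` equals `x i`. -/
def IBAP {𝕜 H : Type*} [RCLike 𝕜] [NormedAddCommGroup H] [InnerProductSpace 𝕜 H]
    [CompleteSpace H] {n : ℕ} (K : Fin n → Submodule 𝕜 H)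
    (hK : ∀ i, IsClosed ((K i : Set H))) : Prop :=
  ∀ x : Fin n → H, (∀ i, x i ∈ K i) →
    ∃ y : H, ∀ i, orthProjCLM (K i) (hK i) y = x i


/-- if each `ker (T k)` is closed and the system
`(ker T 1)ᗮ, ..., (ker T n)ᗮ` has the IBAP, then the system of equations
`T k x = v k` is solvable for all `v k` in the ranges. -/
theorem stmt_2 {𝕜 H : Type*} [RCLike 𝕜] [NormedAddCommGroup H]
    [InnerProductSpace 𝕜 H] [CompleteSpace H] {n : ℕ}
    (V : Fin n → Type*) [∀ k, AddCommGroup (V k)] [∀ k, Module 𝕜 (V k)]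
    (T : ∀ k, H →ₗ[𝕜] V k)
    (hker : ∀ k, IsClosed ((LinearMap.ker (T k) : Submodule 𝕜 H) : Set H))
    (h : IBAP (fun k => (LinearMap.ker (T k))ᗮ)
      (fun k => Submodule.isClosed_orthogonal _)) :
    ∀ v : ∀ k, V k, (∀ k, v k ∈ LinearMap.range (T k)) →
      ∃ x : H, ∀ k, T k x = v k := by
  intro v hv
  choose u hu using hv
  -- project each u k onto (ker T k)ᗮ
  have hcl : ∀ k, CompleteSpace ((LinearMap.ker (T k))ᗮ : Submodule 𝕜 H) :=
    fun k => (Submodule.isClosed_orthogonal _).completeSpace_coe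
  set x : Fin n → H := fun k =>
    haveI := hcl k
    (Submodule.orthogonalProjectionOnto ((LinearMap.ker (T k))ᗮ) (u k) : H) with hx
  have hxmem : ∀ k, x k ∈ (LinearMap.ker (T k))ᗮ := fun k =>
    haveI := hcl k
    (Submodule.orthogonalProjectionOnto ((LinearMap.ker (T k))ᗮ) (u k)).2
  obtain ⟨y, hy⟩ := h x hxmem
  refine ⟨y, fun k => ?_⟩
  haveI := hcl k
  haveI : CompleteSpace (LinearMap.ker (T k)) := (hker k).completeSpace_coe
  have hK : ((LinearMap.ker (T k))ᗮ)ᗮ = LinearMap.ker (T k) :=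
    Submodule.orthogonal_orthogonal _
  -- y - x k ∈ ker T k
  have h1 : y - x k ∈ LinearMap.ker (T k) := by
    have := Submodule.sub_starProjection_mem_orthogonal (K := (LinearMap.ker (T k))ᗮ) y
    rw [Submodule.starProjection_apply] at this
    have hy' : ((Submodule.orthogonalProjectionOnto ((LinearMap.ker (T k))ᗮ) y : H)) = x k := hy k
    rw [hy'] at this
    rwa [hK] at this
  -- u k - x k ∈ ker T k
  have h2 : u k - x k ∈ LinearMap.ker (T k) := by
    have := Submodule.sub_starProjection_mem_orthogonal (K := (LinearMap.ker (T k))ᗮ) (u k)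
    rwa [hK] at this
  have : T k (y - x k) = 0 := h1
  have h2' : T k (u k - x k) = 0 := h2
  rw [map_sub] at this h2'
  have : T k y = T k (x k) := by linear_combination (norm := module) this
  rw [this, ← hu k]
  linear_combination (norm := module) -h2'
end

section
/- Let H be a Hilbert space and H_1, ..., H_n closed subspaces of H. The system H_1, ..., H_n possesses the inverse best approximation property if and only if for every i = 1, ..., n there exists a constant δ_i > 0 such that dist(x, Σ_{j≠i} H_j) ≥ δ_i ‖x‖ for every x ∈ H_i, where Σ_{j≠i} H_j denotes the sum of the subspaces H_j over j ≠ i. -/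
namespace Stmt8Aux

open scoped InnerProductSpace

set_option linter.unusedSectionVars false

variable {𝕜 H : Type*} [RCLike 𝕜] [NormedAddCommGroup H] [InnerProductSpace 𝕜 H]
  [CompleteSpace H] {n : ℕ} (K : Fin n → Submodule 𝕜 H) [∀ i, CompleteSpace (K i)]

local notation "⟪" x ", " y "⟫" => @inner 𝕜 _ _ x y

instance piLpComplete : CompleteSpace (PiLp 2 fun i => K i) := by
  have e : (PiLp 2 fun i => K i) ≃ᵤ (∀ i, K i) :=
    { toEquiv := WithLp.equiv 2 (∀ i, K i)
      uniformContinuous_toFun := PiLp.uniformContinuous_ofLp 2 _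
      uniformContinuous_invFun := PiLp.uniformContinuous_toLp 2 _ }
  exact e.completeSpace_iff.2 inferInstance

/-- The joint projection operator. -/
noncomputable def T : H →L[𝕜] PiLp 2 (fun i => K i) :=
  (PiLp.continuousLinearEquiv 2 𝕜 (fun i => K i)).symm.toContinuousLinearMap.comp
    (ContinuousLinearMap.pi fun i => (K i).orthogonalProjectionOnto)

/-- The summation operator. -/
noncomputable def S : PiLp 2 (fun i => K i) →L[𝕜] H :=
  ∑ i, ((K i).subtypeL.comp (ContinuousLinearMap.proj i)).comp
    (PiLp.continuousLinearEquiv 2 𝕜 (fun i => K i)).toContinuousLinearMap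

theorem T_apply (y : H) (i : Fin n) : T K y i = (K i).orthogonalProjectionOnto y := rfl

theorem S_apply (u : PiLp 2 (fun i => K i)) : S K u = ∑ i, (u i : H) := by
  simp [S, ContinuousLinearMap.sum_apply]

theorem T_surj (c : ℝ) (hc : 0 < c)
    (hbound : ∀ u : PiLp 2 (fun i => K i), c * ‖u‖ ≤ ‖S K u‖) :
    Function.Surjective (T K) := by
  classical
  set A : PiLp 2 (fun i => K i) →L[𝕜] PiLp 2 (fun i => K i) := (T K).comp (S K) with hAdef
  have hinner : ∀ v, ⟪A v, v⟫ = (‖S K v‖ : 𝕜) ^ 2 := by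
    intro v
    calc ⟪A v, v⟫ = ∑ i, ⟪A v i, v i⟫ := PiLp.inner_apply _ _
      _ = ∑ i, ⟪S K v, ((v i : H))⟫ := Finset.sum_congr rfl fun i _ =>
            Submodule.inner_orthogonalProjectionOnto_eq_of_mem_right (K := K i) (v i) (S K v)
      _ = ⟪S K v, ∑ i, ((v i : H))⟫ := (inner_sum _ _ _).symm
      _ = ⟪S K v, S K v⟫ := by rw [← S_apply]
      _ = (‖S K v‖ : 𝕜) ^ 2 := inner_self_eq_norm_sq_to_K _
  have hAbound : ∀ v, c ^ 2 * ‖v‖ ≤ ‖A v‖ := by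
    intro v
    rcases eq_or_ne v 0 with rfl | hv
    · simp
    have hv' : 0 < ‖v‖ := norm_pos_iff.2 hv
    have h := hbound v
    have h1 : c ^ 2 * ‖v‖ ^ 2 ≤ ‖S K v‖ ^ 2 := by
      have hsq := mul_le_mul h h (by positivity) (norm_nonneg _)
      nlinarith
    have h2 : ‖S K v‖ ^ 2 ≤ ‖A v‖ * ‖v‖ := by
      have h3 := norm_inner_le_norm (𝕜 := 𝕜) (A v) v
      have h4 : ‖⟪A v, v⟫‖ = ‖S K v‖ ^ 2 := by
        rw [hinner v]
        simp [norm_pow]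
      linarith
    nlinarith
  have hanti : AntilipschitzWith (⟨c, hc.le⟩ ^ 2 : NNReal)⁻¹ A := by
    apply A.antilipschitz_of_bound
    intro v
    have h5 := hAbound v
    have hpos : (0:ℝ) < c ^ 2 := by positivity
    rw [NNReal.coe_inv]
    push_cast
    rw [inv_mul_eq_div, show ((⟨c, hc.le⟩ ^ 2 : NNReal) : ℝ) = c ^ 2 from NNReal.coe_pow _ 2,
      le_div_iff₀ hpos]
    linarith
  have hclosed : IsClosed (Set.range A) := hanti.isClosed_range A.uniformContinuous
  set R : Submodule 𝕜 (PiLp 2 fun i => K i) := LinearMap.range A.toLinearMap with hRdef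
  have hclosed' : IsClosed (R : Set (PiLp 2 fun i => K i)) := by
    have hh : (R : Set (PiLp 2 fun i => K i)) = Set.range A := by
      ext w; simp [hRdef, LinearMap.mem_range, Set.mem_range]
    rwa [hh]
  haveI : CompleteSpace R := hclosed'.completeSpace_coe
  have hbot : Rᗮ = ⊥ := by
    rw [Submodule.eq_bot_iff]
    intro v hv
    have h0 : ⟪A v, v⟫ = 0 :=
      (Submodule.mem_orthogonal R v).1 hv (A v) (LinearMap.mem_range.2 ⟨v, rfl⟩)
    rw [hinner v] at h0
    have hS0 : ‖S K v‖ = 0 := by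
      have := sq_eq_zero_iff.1 h0
      exact_mod_cast RCLike.ofReal_eq_zero.1 this
    have hb := hbound v
    have : ‖v‖ = 0 := by nlinarith [norm_nonneg v]
    exact norm_eq_zero.1 this
  have htop : R = ⊤ := Submodule.orthogonal_eq_bot_iff.1 hbot
  intro u
  have hu : u ∈ R := htop ▸ Submodule.mem_top
  obtain ⟨v, hv⟩ := LinearMap.mem_range.1 hu
  exact ⟨S K v, hv⟩

end Stmt8Aux

open scoped InnerProductSpace in
/-- IBAP iff for every `i` there is `δ > 0` with
`dist(x, Σ_{j ≠ i} K j) ≥ δ ‖x‖` for all `x ∈ K i`. -/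
theorem stmt_8 {𝕜 H : Type*} [RCLike 𝕜] [NormedAddCommGroup H]
    [InnerProductSpace 𝕜 H] [CompleteSpace H] {n : ℕ}
    (K : Fin n → Submodule 𝕜 H) (hK : ∀ i, IsClosed ((K i : Set H))) :
    IBAP K hK ↔
      ∀ i, ∃ δ : ℝ, 0 < δ ∧ ∀ x ∈ K i,
        δ * ‖x‖ ≤ Metric.infDist x
          ((⨆ j, ⨆ (_ : j ≠ i), K j : Submodule 𝕜 H) : Set H) := by
  classical
  haveI : ∀ i, CompleteSpace (K i) := fun i => (hK i).completeSpace_coe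
  constructor
  · intro hib i
    have hsurj : Function.Surjective (Stmt8Aux.T K) := by
      intro u
      obtain ⟨y, hy⟩ := hib (fun j => (u j : H)) (fun j => (u j).2)
      exact ⟨y, PiLp.ext fun j => Subtype.ext (hy j)⟩
    obtain ⟨C, hC0, hCp⟩ := (Stmt8Aux.T K).exists_preimage_norm_le hsurj
    refine ⟨C⁻¹, inv_pos.2 hC0, fun x hx => ?_⟩
    set M : Submodule 𝕜 H := ⨆ j, ⨆ (_ : j ≠ i), K j with hM
    rcases eq_or_ne x 0 with rfl | hx0
    · simpa using Metric.infDist_nonneg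
    have hxpos : 0 < ‖x‖ := norm_pos_iff.2 hx0
    set u : PiLp 2 (fun j => (K j : Type _)) := WithLp.toLp 2 (Pi.single i ⟨x, hx⟩) with hu
    have hu_norm : ‖u‖ = ‖x‖ := by
      have h2 : ‖u‖ ^ 2 = ‖x‖ ^ 2 := by
        rw [PiLp.norm_sq_eq_of_L2, Finset.sum_eq_single i]
        · rw [hu]; simp
        · intro j _ hj; rw [hu]; simp [Pi.single_eq_of_ne hj]
        · intro hni; exact absurd (Finset.mem_univ i) hni
      calc ‖u‖ = Real.sqrt (‖u‖ ^ 2) := (Real.sqrt_sq (norm_nonneg _)).symm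
        _ = Real.sqrt (‖x‖ ^ 2) := by rw [h2]
        _ = ‖x‖ := Real.sqrt_sq (norm_nonneg _)
    obtain ⟨y, hyT, hy_norm⟩ := hCp u
    have hyi : ((K i).orthogonalProjectionOnto y : H) = x := by
      have := PiLp.ext_iff.1 hyT i
      rw [Stmt8Aux.T_apply] at this
      rw [this, hu]
      simp
    have hyj : ∀ j, j ≠ i → y ∈ (K j)ᗮ := by
      intro j hj
      have := PiLp.ext_iff.1 hyT j
      rw [Stmt8Aux.T_apply] at this
      rw [hu] at this
      rw [PiLp.toLp_apply, Pi.single_eq_of_ne hj] at this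
      exact Submodule.orthogonalProjectionOnto_eq_zero_iff.1 this
    have hMy : M ≤ (𝕜 ∙ y)ᗮ := by
      refine iSup_le fun j => iSup_le fun hj w hw => ?_
      exact Submodule.mem_orthogonal_singleton_iff_inner_left.2
        ((Submodule.mem_orthogonal (K j) y).1 (hyj j hj) w hw)
    have hinner_yz : ∀ z ∈ M, ⟪y, z⟫_𝕜 = 0 := fun z hz =>
      Submodule.mem_orthogonal_singleton_iff_inner_right.1 (hMy hz)
    have hyx : ⟪y, x⟫_𝕜 = (‖x‖ : 𝕜) ^ 2 := by
      have hmem := (K i).sub_starProjection_mem_orthogonal y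
      have h0 : ⟪y - ((K i).orthogonalProjectionOnto y : H), x⟫_𝕜 = 0 :=
        Submodule.inner_left_of_mem_orthogonal hx hmem
      rw [inner_sub_left, sub_eq_zero] at h0
      rw [h0, hyi]
      exact inner_self_eq_norm_sq_to_K x
    have key : ∀ z ∈ (M : Set H), C⁻¹ * ‖x‖ ≤ dist x z := by
      intro z hz
      have h1 : (‖x‖ : ℝ) ^ 2 = RCLike.re (⟪y, x - z⟫_𝕜) := by
        rw [inner_sub_right, hinner_yz z hz, sub_zero, hyx, ← RCLike.ofReal_pow,
          RCLike.ofReal_re]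
      have h2 : RCLike.re (⟪y, x - z⟫_𝕜) ≤ ‖y‖ * ‖x - z‖ :=
        le_trans (RCLike.re_le_norm _) (norm_inner_le_norm _ _)
      have h3 : ‖y‖ ≤ C * ‖x‖ := by rw [← hu_norm]; exact hy_norm
      rw [dist_eq_norm]
      have h4 : ‖x‖ ^ 2 ≤ C * ‖x‖ * ‖x - z‖ := by
        nlinarith [norm_nonneg (x - z), norm_nonneg y]
      have h5 : ‖x‖ ≤ C * ‖x - z‖ := by nlinarith
      calc C⁻¹ * ‖x‖ ≤ C⁻¹ * (C * ‖x - z‖) :=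
            mul_le_mul_of_nonneg_left h5 (inv_nonneg.2 hC0.le)
        _ = ‖x - z‖ := by field_simp
    by_contra hlt
    push_neg at hlt
    obtain ⟨z, hz, hdz⟩ := (Metric.infDist_lt_iff ⟨0, M.zero_mem⟩).1 hlt
    exact absurd hdz (not_lt.2 (key z hz))
  · intro h x hx
    rcases Nat.eq_zero_or_pos n with hn | hn
    · refine ⟨0, fun i => ?_⟩
      exact absurd i.2 (by omega)
    choose δ hδpos hδ using h
    haveI : Nonempty (Fin n) := ⟨⟨0, hn⟩⟩
    set c : ℝ := Finset.univ.inf' Finset.univ_nonempty δ with hc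
    have hcpos : 0 < c := (Finset.lt_inf'_iff _).2 fun i _ => hδpos i
    have hkey : ∀ (u : PiLp 2 fun j => (K j : Type _)) (i : Fin n),
        δ i * ‖(u i : H)‖ ≤ ‖Stmt8Aux.S K u‖ := by
      intro u i
      have hz : -∑ j ∈ Finset.univ.erase i, ((u j : H)) ∈
          (⨆ j, ⨆ (_ : j ≠ i), K j : Submodule 𝕜 H) := by
        refine neg_mem (Submodule.sum_mem _ fun j hj => ?_)
        exact Submodule.mem_iSup_of_mem j
          (Submodule.mem_iSup_of_mem (Finset.ne_of_mem_erase hj) (u j).2)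
      have h1 := hδ i (u i : H) (u i).2
      have h2 := Metric.infDist_le_dist_of_mem (x := ((u i : H))) hz
      have h3 : dist ((u i : H)) (-∑ j ∈ Finset.univ.erase i, ((u j : H))) =
          ‖Stmt8Aux.S K u‖ := by
        rw [dist_eq_norm, sub_neg_eq_add, Stmt8Aux.S_apply]
        exact congrArg norm (Finset.add_sum_erase Finset.univ (fun j => ((u j : H))) (Finset.mem_univ i))
      rw [h3] at h2
      linarith
    have hbound : ∀ u : PiLp 2 fun j => (K j : Type _),
        (c / Real.sqrt n) * ‖u‖ ≤ ‖Stmt8Aux.S K u‖ := by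
      intro u
      have hn1 : (0:ℝ) < (n:ℝ) := by exact_mod_cast hn
      have hsq : 0 < Real.sqrt (n:ℝ) := Real.sqrt_pos.2 hn1
      have h1 : ‖u‖ ^ 2 ≤ (n:ℝ) * (c⁻¹ * ‖Stmt8Aux.S K u‖) ^ 2 := by
        rw [PiLp.norm_sq_eq_of_L2]
        calc ∑ j, ‖u j‖ ^ 2 ≤ ∑ _j : Fin n, (c⁻¹ * ‖Stmt8Aux.S K u‖) ^ 2 := by
              refine Finset.sum_le_sum fun j _ => ?_
              have h2 : c ≤ δ j := Finset.inf'_le _ (Finset.mem_univ j)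
              have h3 := hkey u j
              have h4 : ‖u j‖ ≤ c⁻¹ * ‖Stmt8Aux.S K u‖ := by
                rw [inv_mul_eq_div, le_div_iff₀ hcpos]
                have : ‖u j‖ = ‖(u j : H)‖ := rfl
                rw [this]
                nlinarith [norm_nonneg ((u j : H))]
              exact pow_le_pow_left₀ (norm_nonneg _) h4 2
          _ = (n:ℝ) * (c⁻¹ * ‖Stmt8Aux.S K u‖) ^ 2 := by
              rw [Finset.sum_const, Finset.card_univ, Fintype.card_fin, nsmul_eq_mul]
      have h2 : ‖u‖ ≤ Real.sqrt n * (c⁻¹ * ‖Stmt8Aux.S K u‖) := by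
        calc ‖u‖ = Real.sqrt (‖u‖ ^ 2) := (Real.sqrt_sq (norm_nonneg _)).symm
          _ ≤ Real.sqrt ((n:ℝ) * (c⁻¹ * ‖Stmt8Aux.S K u‖) ^ 2) := Real.sqrt_le_sqrt h1
          _ = Real.sqrt n * (c⁻¹ * ‖Stmt8Aux.S K u‖) := by
              rw [Real.sqrt_mul hn1.le, Real.sqrt_sq (by positivity)]
      rw [div_mul_eq_mul_div, div_le_iff₀ hsq]
      calc c * ‖u‖ ≤ c * (Real.sqrt n * (c⁻¹ * ‖Stmt8Aux.S K u‖)) :=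
            mul_le_mul_of_nonneg_left h2 hcpos.le
        _ = ‖Stmt8Aux.S K u‖ * Real.sqrt n := by field_simp
    have hsurj := Stmt8Aux.T_surj K (c / Real.sqrt n) (by positivity) hbound
    obtain ⟨y, hy⟩ := hsurj
      (WithLp.toLp 2 (fun j => (⟨x j, hx j⟩ : K j)) : PiLp 2 fun j => (K j : Type _))
    refine ⟨y, fun i => ?_⟩
    have h1 := PiLp.ext_iff.1 hy i
    rw [Stmt8Aux.T_apply] at h1
    exact congrArg Subtype.val h1
end

section
/- Let H be a Hilbert space, A : H → H a continuous linear operator, λ_1, ..., λ_n pairwise distinct scalars, and m_1, ..., m_n natural numbers (m_k ≥ 1). Then the system of root subspaces H_k := ker((A − λ_k I)^{m_k}), k = 1, ..., n, possesses the inverse best approximation property. -/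
open Polynomial in
/-- the root subspaces `ker ((A - lam k • I) ^ (m k))` of a
continuous linear operator, for pairwise distinct scalars `lam k` and natural
numbers `m k ≥ 1`, possess the IBAP. -/
theorem stmt_15 {𝕜 H : Type*} [RCLike 𝕜] [NormedAddCommGroup H]
    [InnerProductSpace 𝕜 H] [CompleteSpace H] {n : ℕ}
    (A : H →L[𝕜] H) (lam : Fin n → 𝕜)
    (hlam : ∀ i j, i ≠ j → lam i ≠ lam j)
    (m : Fin n → ℕ) (hm : ∀ k, 1 ≤ m k) :
    IBAP (fun k =>
        LinearMap.ker (((A - lam k • (ContinuousLinearMap.id 𝕜 H)) ^ (m k) : H →L[𝕜] H) : H →ₗ[𝕜] H))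
      (fun k => ContinuousLinearMap.isClosed_ker _) := by
  classical
  intro x hx
  set c : Fin n → 𝕜 := fun k => starRingEnd 𝕜 (lam k) with hc
  set f : Fin n → Polynomial 𝕜 := fun k => (X - C (c k)) ^ (m k) with hf
  set A' : H →L[𝕜] H := ContinuousLinearMap.adjoint A with hA'
  set B : Fin n → (H →L[𝕜] H) :=
    fun k => (A - lam k • (ContinuousLinearMap.id 𝕜 H)) ^ (m k) with hB
  have hstar : ∀ k, star (B k) = Polynomial.aeval A' (f k) := by
    intro k
    rw [hB, hf, map_pow, star_pow]
    congr 1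
    rw [map_sub, Polynomial.aeval_X, Polynomial.aeval_C, Algebra.algebraMap_eq_smul_one,
      star_sub, star_smul, ContinuousLinearMap.star_eq_adjoint,
      ← ContinuousLinearMap.one_def, star_one]
    rfl
  -- key orthogonality: anything of the form aeval A' (f k * q) w is ⟂ to ker (B k)
  have hperp : ∀ (k : Fin n) (q : Polynomial 𝕜) (w z : H), z ∈ LinearMap.ker (B k : H →ₗ[𝕜] H) →
      inner 𝕜 (Polynomial.aeval A' (f k * q) w) z = (0 : 𝕜) := by
    intro k q w z hz
    rw [map_mul, ContinuousLinearMap.mul_apply, ← hstar k,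
      ContinuousLinearMap.star_eq_adjoint, ContinuousLinearMap.adjoint_inner_left,
      @id (B k z = 0) (LinearMap.mem_ker.mp hz), inner_zero_right]
  -- coprimality
  have hcinj : Function.Injective c := by
    intro i j h
    by_contra hij
    exact hlam i j hij (by
      have := congrArg (starRingEnd 𝕜) h
      simpa [hc] using this)
  have hcop : ∀ k : Fin n, IsCoprime (f k) (∏ j ∈ Finset.univ.erase k, f j) := by
    intro k
    apply IsCoprime.prod_right
    intro j hj
    exact (Polynomial.pairwise_coprime_X_sub_C hcinj
      (fun h => (Finset.mem_erase.mp hj).1 h.symm)).pow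
  -- Bezout: u k * f k + v k * g k = 1
  choose u v huv using fun k => hcop k
  set e : Fin n → Polynomial 𝕜 := fun k => v k * ∏ j ∈ Finset.univ.erase k, f j with he
  refine ⟨∑ j, Polynomial.aeval A' (e j) (x j), fun k => ?_⟩
  haveI : CompleteSpace (LinearMap.ker (B k : H →ₗ[𝕜] H)) :=
    (ContinuousLinearMap.isClosed_ker (B k)).completeSpace_coe
  show (LinearMap.ker (B k : H →ₗ[𝕜] H)).starProjection _ = x k
  apply Submodule.eq_starProjection_of_mem_of_inner_eq_zero (hx k)
  intro z hz
  have key : ∀ j, inner 𝕜 (Polynomial.aeval A' (e j) (x j)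
      - (if j = k then x k else 0)) z = (0 : 𝕜) := by
    intro j
    by_cases hjk : j = k
    · subst hjk
      rw [if_pos rfl]
      have : Polynomial.aeval A' (e j) (x j) - x j
          = Polynomial.aeval A' (f j * (-(u j))) (x j) := by
        have hpoly : e j - 1 = f j * (-(u j)) := by
          show v j * (∏ i ∈ Finset.univ.erase j, f i) - 1 = f j * (-(u j))
          linear_combination huv j
        calc Polynomial.aeval A' (e j) (x j) - x j
            = Polynomial.aeval A' (e j - 1) (x j) := by
              rw [map_sub, map_one, ContinuousLinearMap.sub_apply,
                ContinuousLinearMap.one_apply]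
          _ = _ := by rw [hpoly]
      rw [this]
      exact hperp j _ _ _ hz
    · simp only [if_neg hjk, sub_zero]
      have hdvd : f k ∣ e j := by
        rw [he]
        exact Dvd.dvd.mul_left
          (Finset.dvd_prod_of_mem f (Finset.mem_erase.mpr ⟨fun h => hjk h.symm, Finset.mem_univ k⟩))
          (v j)
      obtain ⟨q, hq⟩ := hdvd
      rw [hq]
      exact hperp k q _ _ hz
  calc inner 𝕜 ((∑ j, Polynomial.aeval A' (e j) (x j)) - x k) z
      = inner 𝕜 (∑ j, (Polynomial.aeval A' (e j) (x j) - if j = k then x k else 0)) z := by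
        congr 1
        rw [Finset.sum_sub_distrib]
        simp
    _ = ∑ j, inner 𝕜 (Polynomial.aeval A' (e j) (x j) - if j = k then x k else 0) z := by
        rw [sum_inner]
    _ = (0 : 𝕜) := Finset.sum_eq_zero fun j _ => key j
end

section
/- Let H be a Hilbert space and M, N two closed subspaces of H, and let P denote the orthogonal projection onto M. If ‖P_M − P_N‖ < 1 (where P_M, P_N are the orthogonal projections onto M and N), then P maps N onto M, i.e., P(N) = M. -/
/-- if the opening `‖P_M - P_N‖` between two closed subspaces is
less than `1`, then the orthogonal projection onto `M` maps `N` onto `M`. -/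
theorem stmt_17 {𝕜 H : Type*} [RCLike 𝕜] [NormedAddCommGroup H]
    [InnerProductSpace 𝕜 H] [CompleteSpace H]
    (M N : Submodule 𝕜 H)
    (hM : IsClosed (M : Set H)) (hN : IsClosed (N : Set H))
    (h : ‖orthProjCLM M hM - orthProjCLM N hN‖ < 1) :
    orthProjCLM M hM '' (N : Set H) = (M : Set H) := by
  haveI : CompleteSpace M := hM.completeSpace_coe
  haveI : CompleteSpace N := hN.completeSpace_coe
  apply Set.Subset.antisymm
  · rintro _ ⟨y, hy, rfl⟩
    exact (Submodule.orthogonalProjectionOnto M y).2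
  · intro x hx
    set PM := orthProjCLM M hM with hPM
    set PN := orthProjCLM N hN with hPNdef
    let B : M →L[𝕜] M := (Submodule.orthogonalProjectionOnto M).comp (PN.comp M.subtypeL)
    have key : ∀ m : M, ((1 : M →L[𝕜] M) - B) m
        = Submodule.orthogonalProjectionOnto M ((PM - PN) (m : H)) := by
      intro m
      have hPMm : PM (m : H) = (m : H) := by
        simp [hPM, orthProjCLM, Submodule.orthogonalProjectionOnto_mem_subspace_eq_self]
      have h2 : (PM - PN) (m : H) = (m : H) - PN (m : H) := by
        simp [ContinuousLinearMap.sub_apply, hPMm]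
      rw [h2, map_sub, Submodule.orthogonalProjectionOnto_mem_subspace_eq_self]
      rfl
    have hnorm : ‖(1 : M →L[𝕜] M) - B‖ < 1 := by
      refine lt_of_le_of_lt (ContinuousLinearMap.opNorm_le_bound _ (norm_nonneg _) ?_) h
      intro m
      rw [key m]
      have h1 : ‖(Submodule.orthogonalProjectionOnto M ((PM - PN) (m : H)) : M)‖
          ≤ ‖(PM - PN) (m : H)‖ := by
        calc ‖(Submodule.orthogonalProjectionOnto M ((PM - PN) (m : H)) : M)‖
            ≤ ‖Submodule.orthogonalProjectionOnto M‖ * ‖(PM - PN) (m : H)‖ :=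
              (Submodule.orthogonalProjectionOnto M).le_opNorm _
          _ ≤ 1 * ‖(PM - PN) (m : H)‖ := by
              gcongr; exact Submodule.orthogonalProjectionOnto_norm_le M
          _ = _ := one_mul _
      calc ‖(Submodule.orthogonalProjectionOnto M ((PM - PN) (m : H)) : M)‖
          ≤ ‖(PM - PN) (m : H)‖ := h1
        _ ≤ ‖PM - PN‖ * ‖m‖ := by
            simpa using (PM - PN).le_opNorm (m : H)
    -- B is invertible by the Neumann series
    let u : (M →L[𝕜] M)ˣ := Units.oneSub _ hnorm
    have huval : (u : M →L[𝕜] M) = B := by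
      show 1 - (1 - B) = B
      rw [sub_sub_cancel]
    obtain ⟨m, hm⟩ : ∃ m : M, B m = ⟨x, hx⟩ := by
      refine ⟨(↑u⁻¹ : M →L[𝕜] M) ⟨x, hx⟩, ?_⟩
      have : ((u : M →L[𝕜] M) * (↑u⁻¹ : M →L[𝕜] M)) ⟨x, hx⟩ = ⟨x, hx⟩ := by
        rw [u.mul_inv]; rfl
      rwa [huval] at this
    refine ⟨PN (m : H), (Submodule.orthogonalProjectionOnto N (m : H)).2, ?_⟩
    have : (B m : H) = x := by rw [hm]
    simpa [hPM, orthProjCLM, B] using this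
end
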